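/- Let V be a finite type, M ≥ 1 an integer, w : V → V → ℤ with |w u v| ≤ M for all u ≠ v, and let w₄ be the four-layer graph on V × Fin 4. Then for every v : V, dist_{w₄}((v,0),(v,3)) = ⨅ over pairs (u,z) with v, u, z pairwise distinct of (3M + w v u + w u z + w z v) (a nonnegative integer for each such pair, with the infimum over an empty index set being ⊤). -/

import Mathlib

/-- Weight of a walk starting at `u` and visiting the vertices of `p` in order. -/
def walkWeight {V : Type*} (w : V → V → ℕ∞) : V → List V → ℕ∞
  | _, [] => 0
  | u, x :: xs => w u x + walkWeight w x xs

/-- Shortest-path distance: infimum of weights of walks from `u` to `v`. -/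
noncomputable def gdist {V : Type*} (w : V → V → ℕ∞) (u v : V) : ℕ∞ :=
  ⨅ (p : List V) (_ : (u :: p).getLast (List.cons_ne_nil u p) = v), walkWeight w u p

/-- Eccentricity of a vertex. -/
noncomputable def ecc {V : Type*} (w : V → V → ℕ∞) (v : V) : ℕ∞ :=
  ⨆ u, gdist w v u

/-- Radius. -/
noncomputable def rad {V : Type*} (w : V → V → ℕ∞) : ℕ∞ :=
  ⨅ v, ecc w v

/-- Diameter. -/
noncomputable def diam {V : Type*} (w : V → V → ℕ∞) : ℕ∞ :=
  ⨆ v, ecc w v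

/-- Four-layer graph on `V × Fin 4` (parts A, B, C, D): edges `(u,i) → (v,i+1)` of weight
`M + w u v` for each `i ∈ {0,1,2}` and `u ≠ v`; all other weights `⊤`. -/
def layer4 {V : Type*} [DecidableEq V] (w : V → V → ℤ) (M : ℤ) :
    V × Fin 4 → V × Fin 4 → ℕ∞ := fun p q =>
  if p.1 ≠ q.1 ∧ (q.2 : ℕ) = (p.2 : ℕ) + 1 then ((M + w p.1 q.1).toNat : ℕ∞) else ⊤

lemma layer4_ne_top {V : Type*} [DecidableEq V] {w : V → V → ℤ} {M : ℤ}
    {p q : V × Fin 4} (h : layer4 w M p q ≠ ⊤) :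
    p.1 ≠ q.1 ∧ (q.2 : ℕ) = (p.2 : ℕ) + 1 ∧
      layer4 w M p q = ((M + w p.1 q.1).toNat : ℕ∞) := by
  unfold layer4 at *
  split at h
  · next hc => exact ⟨hc.1, hc.2, by rw [if_pos hc]⟩
  · exact absurd rfl h

lemma layer_len {V : Type*} [DecidableEq V] (w : V → V → ℤ) (M : ℤ) :
    ∀ (p : List (V × Fin 4)) (s : V × Fin 4),
      walkWeight (layer4 w M) s p ≠ ⊤ →
      ((((s :: p).getLast (List.cons_ne_nil s p)).2 : ℕ) = (s.2 : ℕ) + p.length) := by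
  intro p
  induction p with
  | nil => intro s _; simp
  | cons a xs ih =>
    intro s h
    rw [walkWeight, Ne, ENat.add_eq_top, not_or] at h
    obtain ⟨h1, h2⟩ := h
    have ha := (layer4_ne_top h1).2.1
    have := ih a h2
    rw [List.getLast_cons (List.cons_ne_nil a xs)]
    simp only [List.length_cons] at *
    omega

lemma arith {M a b c : ℤ} (ha : -M ≤ a) (hb : -M ≤ b) (hc : -M ≤ c) :
    ((M + a).toNat : ℕ∞) + ((M + b).toNat : ℕ∞) + ((M + c).toNat : ℕ∞) =
      ((3 * M + a + b + c).toNat : ℕ∞) := by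
  have : (M + a).toNat + (M + b).toNat + (M + c).toNat = (3 * M + a + b + c).toNat := by
    omega
  rw [← this]
  push_cast
  ring

theorem stmt15 {V : Type*} [Fintype V] [DecidableEq V] (M : ℤ) (hM : 1 ≤ M)
    (w : V → V → ℤ) (hbound : ∀ u v : V, u ≠ v → |w u v| ≤ M) :
    ∀ v : V,
      gdist (layer4 w M) (v, 0) (v, 3) =
        ⨅ (u : V) (z : V) (_ : v ≠ u ∧ v ≠ z ∧ u ≠ z),
          ((3 * M + w v u + w u z + w z v).toNat : ℕ∞) := by
  intro v
  have hneg : ∀ u z : V, u ≠ z → -M ≤ w u z := fun u z h => by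
    have := abs_le.mp (hbound u z h); omega
  apply le_antisymm
  · -- gdist ≤ inf: exhibit walks
    refine le_iInf fun u => le_iInf fun z => le_iInf fun ⟨h1, h2, h3⟩ => ?_
    have key : walkWeight (layer4 w M) (v, (0 : Fin 4)) [(u, 1), (z, 2), (v, 3)] =
        ((3 * M + w v u + w u z + w z v).toNat : ℕ∞) := by
      simp only [walkWeight, add_zero]
      have e1 : layer4 w M (v, (0 : Fin 4)) (u, 1) = ((M + w v u).toNat : ℕ∞) := by
        rw [layer4, if_pos]; exact ⟨h1, rfl⟩
      have e2 : layer4 w M (u, (1 : Fin 4)) (z, 2) = ((M + w u z).toNat : ℕ∞) := by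
        rw [layer4, if_pos]; exact ⟨h3, rfl⟩
      have e3 : layer4 w M (z, (2 : Fin 4)) (v, 3) = ((M + w z v).toNat : ℕ∞) := by
        rw [layer4, if_pos]; exact ⟨fun hh => h2 hh.symm, rfl⟩
      rw [e1, e2, e3, ← add_assoc,
        arith (hneg v u h1) (hneg u z h3) (hneg z v fun hh => h2 hh.symm)]
    calc gdist (layer4 w M) (v, 0) (v, 3) ≤
        walkWeight (layer4 w M) (v, 0) [(u, 1), (z, 2), (v, 3)] := by
          refine iInf_le_of_le [(u, 1), (z, 2), (v, 3)] (iInf_le_of_le ?_ le_rfl)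
          simp
      _ = _ := key
  · -- inf ≤ gdist: every walk has weight ≥ inf
    refine le_iInf fun p => le_iInf fun hp => ?_
    by_cases htop : walkWeight (layer4 w M) (v, (0 : Fin 4)) p = ⊤
    · rw [htop]; exact le_top
    · have hlen := layer_len w M p (v, 0) htop
      rw [hp] at hlen
      simp only [Fin.isValue] at hlen
      have hlen3 : p.length = 3 := by
        have : ((3 : Fin 4) : ℕ) = 3 := rfl
        have : ((0 : Fin 4) : ℕ) = 0 := rfl
        omega
      match p, hlen3 with
      | [a, b, c], _ =>
        simp only [walkWeight, add_zero] at htop ⊢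
        have h1 : layer4 w M (v, (0:Fin 4)) a ≠ ⊤ := fun e => htop (by rw [e]; simp)
        have h2 : layer4 w M a b ≠ ⊤ := fun e => htop (by rw [e]; simp)
        have h3 : layer4 w M b c ≠ ⊤ := fun e => htop (by rw [e]; simp)
        obtain ⟨hne1, -, he1⟩ := layer4_ne_top h1
        obtain ⟨hne2, -, he2⟩ := layer4_ne_top h2
        obtain ⟨hne3, -, he3⟩ := layer4_ne_top h3
        have hc : c = (v, 3) := by
          simpa [List.getLast] using hp
        subst hc
        simp only at hne1 hne2 hne3 he1 he2 he3
        have hd : v ≠ a.1 ∧ v ≠ b.1 ∧ a.1 ≠ b.1 :=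
          ⟨hne1, fun hh => hne3 hh.symm, hne2⟩
        calc (⨅ (u : V) (z : V) (_ : v ≠ u ∧ v ≠ z ∧ u ≠ z),
              ((3 * M + w v u + w u z + w z v).toNat : ℕ∞)) ≤
            ((3 * M + w v a.1 + w a.1 b.1 + w b.1 v).toNat : ℕ∞) := by
              exact iInf_le_of_le a.1 (iInf_le_of_le b.1 (iInf_le_of_le hd le_rfl))
          _ = _ := by
              rw [he1, he2, he3, ← add_assoc,
                arith (hneg v a.1 hne1) (hneg a.1 b.1 hne2) (hneg b.1 v hne3)]
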